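/- For every n ≥ 1, every full-rank lattice L ⊆ ℝⁿ, and every γ > 1, there exists a (γ√n, γ)-filtration of L. -/

import Mathlib

open Metric Submodule
noncomputable section

/-- The length of a shortest nonzero vector of a set `A`. -/
def lambda1 {E : Type*} [NormedAddCommGroup E] (A : Set E) : ℝ :=
  sInf (norm '' (A \ {0}))

/-- The covering radius of a lattice (given as a set): the supremum, over points `x` in the
real span of `A`, of the distance from `x` to `A`. -/
def covRad {E : Type*} [NormedAddCommGroup E] [NormedSpace ℝ E] (A : Set E) : ℝ :=
  sSup ((fun x => Metric.infDist x A) '' ((Submodule.span ℝ A : Submodule ℝ E) : Set E))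

/-- The image of the set `A` under the orthogonal projection onto the orthogonal complement
of the real span of `S`. -/
def projPerp {n : ℕ} (S A : Set (EuclideanSpace ℝ (Fin n))) : Set (EuclideanSpace ℝ (Fin n)) :=
  (fun x => ((orthogonalProjection (Submodule.span ℝ S)ᗮ) x : EuclideanSpace ℝ (Fin n))) '' A

/-- The quotient lattice `L_j / L_{j−1}`: the orthogonal projection of `L_j` onto the
orthogonal complement of the span of `L_{j−1}`. -/
def quotLat {n : ℕ} (Ls : ℕ → Submodule ℤ (EuclideanSpace ℝ (Fin n))) (j : ℕ) :
    Set (EuclideanSpace ℝ (Fin n)) :=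
  projPerp (Ls (j - 1) : Set (EuclideanSpace ℝ (Fin n)))
    (Ls j : Set (EuclideanSpace ℝ (Fin n)))

/-- `Ls 0 ⊂ Ls 1 ⊂ ⋯ ⊂ Ls m` is a chain of primitive sublattices of `L` from `{0}` to `L`. -/
def IsPrimitiveChain {n : ℕ} (L : Submodule ℤ (EuclideanSpace ℝ (Fin n))) (m : ℕ)
    (Ls : ℕ → Submodule ℤ (EuclideanSpace ℝ (Fin n))) : Prop :=
  Ls 0 = ⊥ ∧ Ls m = L ∧ (∀ j, j < m → Ls j < Ls (j + 1)) ∧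
    ∀ j, j ≤ m → (Ls j : Set (EuclideanSpace ℝ (Fin n)))
      = (L : Set (EuclideanSpace ℝ (Fin n)))
        ∩ (Submodule.span ℝ (Ls j : Set (EuclideanSpace ℝ (Fin n))) :
            Submodule ℝ (EuclideanSpace ℝ (Fin n)))

/-- A `(q, γ)`-filtration of `L`: a chain of primitive sublattices such that
`μ(L_j/L_{j−1}) ≤ q·λ₁(L_j/L_{j−1})/2` and `λ₁(L_{j+1}/L_j) ≥ γ·λ₁(L_j/L_{j−1})`. -/
def IsQGFiltration {n : ℕ} (L : Submodule ℤ (EuclideanSpace ℝ (Fin n))) (m : ℕ)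
    (Ls : ℕ → Submodule ℤ (EuclideanSpace ℝ (Fin n))) (q γ : ℝ) : Prop :=
  IsPrimitiveChain L m Ls ∧
  (∀ j, 1 ≤ j → j ≤ m → covRad (quotLat Ls j) ≤ q * lambda1 (quotLat Ls j) / 2) ∧
  (∀ j, 1 ≤ j → j < m → lambda1 (quotLat Ls (j + 1)) ≥ γ * lambda1 (quotLat Ls j))

/-- The `j`-th "compressed projection" embedding `E_{j,α}(x) = Σ_{i=j}^m α^{i−j}·π_i(x)`,
where `π_i` is the orthogonal projection onto `span(L_i) ∩ span(L_{i−1})ᗮ`. -/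
def filtEmbed {n : ℕ} (Ls : ℕ → Submodule ℤ (EuclideanSpace ℝ (Fin n))) (m : ℕ) (α : ℝ)
    (j : ℕ) (x : EuclideanSpace ℝ (Fin n)) : EuclideanSpace ℝ (Fin n) :=
  ∑ i ∈ Finset.Icc j m, α ^ (i - j) •
    ((orthogonalProjection
        ((Submodule.span ℝ (Ls i : Set (EuclideanSpace ℝ (Fin n)))) ⊓
          (Submodule.span ℝ (Ls (i - 1) : Set (EuclideanSpace ℝ (Fin n))))ᗮ) x :
      EuclideanSpace ℝ (Fin n)))

namespace QGF

variable {n : ℕ}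
abbrev Euc (n : ℕ) := EuclideanSpace ℝ (Fin n)

/-- Orthogonal projection onto `Vᗮ`, as a plain function. -/
def Pv (V : Submodule ℝ (Euc n)) (x : Euc n) : Euc n := (orthogonalProjection Vᗮ x : Euc n)

lemma Pv_mem_orth (V : Submodule ℝ (Euc n)) (x : Euc n) : Pv V x ∈ Vᗮ := SetLike.coe_mem _

lemma sub_Pv_mem (V : Submodule ℝ (Euc n)) (x : Euc n) : x - Pv V x ∈ V := by
  have h : x - Pv V x ∈ Vᗮᗮ := Submodule.sub_starProjection_mem_orthogonal (K := Vᗮ) x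
  rwa [Submodule.orthogonal_orthogonal] at h

lemma Pv_eq_self {V : Submodule ℝ (Euc n)} {x : Euc n} (h : x ∈ Vᗮ) : Pv V x = x :=
  Submodule.starProjection_eq_self_iff.2 h

lemma Pv_eq_zero {V : Submodule ℝ (Euc n)} {x : Euc n} (h : x ∈ V) : Pv V x = 0 := by
  have : orthogonalProjection Vᗮ x = 0 :=
    orthogonalProjection_eq_zero_iff.2 (Submodule.le_orthogonal_orthogonal V h)
  simp [Pv, this]

lemma Pv_add (V : Submodule ℝ (Euc n)) (x y : Euc n) : Pv V (x + y) = Pv V x + Pv V y := by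
  simp [Pv]

lemma Pv_sub (V : Submodule ℝ (Euc n)) (x y : Euc n) : Pv V (x - y) = Pv V x - Pv V y := by
  simp [Pv]

lemma norm_Pv_le (V : Submodule ℝ (Euc n)) (x : Euc n) : ‖Pv V x‖ ≤ ‖x‖ := by
  have h1 : x - Pv V x ∈ V := sub_Pv_mem V x
  have h2 : Pv V x ∈ Vᗮ := Pv_mem_orth V x
  have : ‖x‖ ^ 2 = ‖x - Pv V x‖ ^ 2 + ‖Pv V x‖ ^ 2 := by
    have := norm_add_sq_real (x - Pv V x) (Pv V x)
    have hi : inner ℝ (x - Pv V x) (Pv V x) = (0 : ℝ) :=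
      Submodule.inner_right_of_mem_orthogonal h1 h2
    simp only [sub_add_cancel] at this
    rw [this, hi]; ring
  nlinarith [norm_nonneg (x - Pv V x), norm_nonneg (Pv V x), norm_nonneg x]

/-- `lambda1` lower bound. -/
lemma le_lambda1 {A : Set (Euc n)} (hne : (A \ {0}).Nonempty) {c : ℝ}
    (h : ∀ w ∈ A, w ≠ 0 → c ≤ ‖w‖) : c ≤ lambda1 A := by
  apply le_csInf (hne.image norm)
  rintro b ⟨w, ⟨hwA, hw0⟩, rfl⟩
  exact h w hwA (by simpa using hw0)

lemma lambda1_le {A : Set (Euc n)} {w : Euc n} (hw : w ∈ A) (h0 : w ≠ 0) : lambda1 A ≤ ‖w‖ := by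
  have hb : BddBelow (norm '' (A \ {0})) := ⟨0, by rintro b ⟨v, _, rfl⟩; exact norm_nonneg v⟩
  exact csInf_le hb ⟨w, ⟨hw, by simpa using h0⟩, rfl⟩

lemma lambda1_nonneg (A : Set (Euc n)) : 0 ≤ lambda1 A :=
  Real.sInf_nonneg (by rintro b ⟨v, _, rfl⟩; exact norm_nonneg v)

lemma lambda1_mono {A B : Set (Euc n)} (h : A ⊆ B) (hne : (A \ {0}).Nonempty) :
    lambda1 B ≤ lambda1 A := by
  apply le_csInf (hne.image norm)
  rintro b ⟨w, ⟨hwA, hw0⟩, rfl⟩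
  exact lambda1_le (h hwA) (by simpa using hw0)

/-- Local finiteness of a set : every closed ball meets it in a finite set. -/
def LocFin (A : Set (Euc n)) : Prop := ∀ R : ℝ, (A ∩ closedBall 0 R).Finite

/-- λ₁ is attained on a locally finite set. -/
lemma lambda1_attained {A : Set (Euc n)} (hA : LocFin A) (hne : (A \ {0}).Nonempty) :
    ∃ v ∈ A, v ≠ 0 ∧ ‖v‖ = lambda1 A ∧ ∀ w ∈ A, w ≠ 0 → ‖v‖ ≤ ‖w‖ := by
  obtain ⟨a, haA, ha0⟩ := hne
  have ha0' : a ≠ 0 := by simpa using ha0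
  set S : Set (Euc n) := (A \ {0}) ∩ closedBall 0 ‖a‖ with hS
  have hSfin : S.Finite := ((hA ‖a‖).subset (by intro x hx; exact ⟨hx.1.1, hx.2⟩))
  have hSne : S.Nonempty := ⟨a, ⟨haA, ha0⟩, by simp⟩
  have hTfin : (norm '' S).Finite := hSfin.image _
  have hTne : (norm '' S).Nonempty := hSne.image _
  obtain ⟨m, hmT, hmin⟩ := Set.Finite.exists_minimalFor id _ hTfin hTne
  obtain ⟨v, hvS, hvm⟩ := hmT
  have hva : ‖v‖ ≤ ‖a‖ := by simpa [mem_closedBall, dist_eq_norm] using hvS.2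
  have hmin' : ∀ w ∈ A, w ≠ 0 → ‖v‖ ≤ ‖w‖ := by
    intro w hwA hw0
    by_contra hlt
    push_neg at hlt
    have hwS : w ∈ S := ⟨⟨hwA, by simpa using hw0⟩, by
      simp only [mem_closedBall, dist_eq_norm, sub_zero]
      exact le_trans hlt.le hva⟩
    have heq := hmin (j := ‖w‖) ⟨w, hwS, rfl⟩ (by simpa [hvm] using hlt.le)
    simp only [id] at heq
    rw [hvm] at hlt
    linarith
  refine ⟨v, hvS.1.1, by simpa using hvS.1.2, ?_, hmin'⟩
  refine le_antisymm ?_ (lambda1_le hvS.1.1 (by simpa using hvS.1.2))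
  exact le_lambda1 ⟨a, haA, ha0⟩ hmin'


lemma span_int_le_real (s : Set (Euc n)) :
    span ℤ s ≤ (span ℝ s).restrictScalars ℤ :=
  Submodule.span_le.2 fun y hy => Submodule.subset_span hy

/-- Sum of squared Gram–Schmidt norms of a list (head is the "newest" vector). -/
def gsBound : List (Euc n) → ℝ
  | [] => 0
  | b :: rest => ‖Pv (span ℝ {y | y ∈ rest}) b‖ ^ 2 + gsBound rest

lemma gsBound_nonneg (l : List (Euc n)) : 0 ≤ gsBound l := by
  induction l with
  | nil => simp [gsBound]
  | cons b rest ih => simp only [gsBound]; positivity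

/-- The nearest plane algorithm: any point of the real span of a list of vectors is within
`√(gsBound l)/2` of an integer combination. -/
lemma nearest_plane (l : List (Euc n)) :
    ∀ x ∈ span ℝ {y | y ∈ l}, ∃ z ∈ span ℤ {y | y ∈ l}, ‖x - z‖ ^ 2 ≤ gsBound l / 4 := by
  induction l with
  | nil =>
    intro x hx
    have : x = 0 := by simpa [Submodule.mem_bot] using (by simpa using hx : x ∈ span ℝ (∅ : Set (Euc n)))
    exact ⟨0, zero_mem _, by simp [this, gsBound]⟩
  | cons b rest ih =>
    intro x hx
    set V' := span ℝ {y | y ∈ rest} with hV'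
    have hset : {y | y ∈ b :: rest} = insert b {y | y ∈ rest} := by ext y; simp [List.mem_cons]
    rw [hset, Submodule.mem_span_insert] at hx
    obtain ⟨s, v, hv, rfl⟩ := hx
    set pb := Pv V' b with hpb
    set c : ℤ := round s with hc
    have hz'mem : (s - c) • (b - pb) + v ∈ V' :=
      add_mem (Submodule.smul_mem _ _ (sub_Pv_mem V' b)) hv
    obtain ⟨z', hz', hz'b⟩ := ih ((s - c) • (b - pb) + v) hz'mem
    have hz'V : (z' : Euc n) ∈ V' := span_int_le_real _ hz'
    refine ⟨c • b + z', ?_, ?_⟩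
    · rw [hset]
      exact (Submodule.mem_span_insert).2 ⟨c, z', hz', rfl⟩
    · have hxz : s • b + v - ((c : ℤ) • b + z')
          = (s - c) • pb + ((s - c) • (b - pb) + v - z') := by
        have : ((c : ℤ) • b : Euc n) = (c : ℝ) • b := by
          simp [Int.cast_smul_eq_zsmul ℝ]
        rw [this]; module
      rw [hxz]
      have horth : inner ℝ ((s - c) • pb) ((s - c) • (b - pb) + v - z') = (0 : ℝ) := by
        apply Submodule.inner_left_of_mem_orthogonal (K := V')
        · exact sub_mem hz'mem hz'V
        · exact Submodule.smul_mem _ _ (Pv_mem_orth V' b)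
      have hpyth := norm_add_sq_real ((s - c) • pb) ((s - c) • (b - pb) + v - z')
      rw [horth] at hpyth
      have hround : |s - (c : ℝ)| ≤ 1 / 2 := abs_sub_round s
      have h1 : ‖(s - (c : ℝ)) • pb‖ ^ 2 ≤ ‖pb‖ ^ 2 / 4 := by
        rw [norm_smul]
        have hle : ‖s - (c : ℝ)‖ ≤ 1 / 2 := by rwa [Real.norm_eq_abs]
        have ha : (0:ℝ) ≤ ‖s - (c : ℝ)‖ := norm_nonneg _
        have haa : ‖s - (c:ℝ)‖ * ‖s - (c:ℝ)‖ ≤ 1/4 := by nlinarith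
        calc (‖s - (c:ℝ)‖ * ‖pb‖) ^ 2 = (‖s - (c:ℝ)‖ * ‖s - (c:ℝ)‖) * (‖pb‖ * ‖pb‖) := by ring
          _ ≤ (1/4) * (‖pb‖ * ‖pb‖) := mul_le_mul_of_nonneg_right haa (mul_self_nonneg _)
          _ = ‖pb‖ ^ 2 / 4 := by ring
      simp only [gsBound]
      rw [hpyth]
      have : ‖(s - (c:ℝ)) • pb‖ ^ 2 + ‖(s - c) • (b - pb) + v - z'‖ ^ 2
          ≤ ‖pb‖ ^ 2 / 4 + gsBound rest / 4 := add_le_add h1 hz'b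
      calc ‖(s - (c:ℝ)) • pb‖ ^ 2 + 2 * 0 + ‖(s - c) • (b - pb) + v - z'‖ ^ 2
          ≤ ‖pb‖ ^ 2 / 4 + gsBound rest / 4 := by linarith
        _ = (‖pb‖ ^ 2 + gsBound rest) / 4 := by ring

/-- A "good" list for lattice `Λ` and bound `c`: each vector is a lattice vector, independent
from the earlier ones (the tail), with Gram–Schmidt norm `< c`. -/
def Good (Λ : Submodule ℤ (Euc n)) (c : ℝ) : List (Euc n) → Prop
  | [] => True
  | b :: rest => b ∈ Λ ∧ b ∉ span ℝ {y | y ∈ rest}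
      ∧ ‖Pv (span ℝ {y | y ∈ rest}) b‖ < c ∧ Good Λ c rest

lemma Good.mem_lattice {Λ : Submodule ℤ (Euc n)} {c : ℝ} {l : List (Euc n)}
    (h : Good Λ c l) : ∀ y ∈ l, y ∈ Λ := by
  induction l with
  | nil => simp
  | cons b rest ih =>
    intro y hy
    rcases List.mem_cons.1 hy with rfl | hy'
    · exact h.1
    · exact ih h.2.2.2 y hy'

lemma Good.finrank_eq {Λ : Submodule ℤ (Euc n)} {c : ℝ} {l : List (Euc n)}
    (h : Good Λ c l) : Module.finrank ℝ (span ℝ {y | y ∈ l}) = l.length := by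
  induction l with
  | nil =>
    have : {y : Euc n | y ∈ ([] : List (Euc n))} = (∅ : Set (Euc n)) := by ext y; simp
    simp [this]
  | cons b rest ih =>
    have hset : {y | y ∈ b :: rest} = insert b {y | y ∈ rest} := by ext y; simp [List.mem_cons]
    have hb : b ∉ span ℝ {y | y ∈ rest} := h.2.1
    have hb0 : b ≠ 0 := fun h0 => hb (h0 ▸ zero_mem _)
    have hinf : span ℝ {b} ⊓ span ℝ {y | y ∈ rest} = ⊥ := by
      rw [Submodule.eq_bot_iff]
      rintro x ⟨hx1, hx2⟩
      obtain ⟨t, rfl⟩ := Submodule.mem_span_singleton.1 hx1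
      by_contra hne
      have ht : t ≠ 0 := fun h0 => hne (by simp [h0])
      exact hb (by simpa [smul_smul, inv_mul_cancel₀ ht] using
        Submodule.smul_mem _ t⁻¹ hx2)
    have := Submodule.finrank_sup_add_finrank_inf_eq (span ℝ {b}) (span ℝ {y | y ∈ rest})
    rw [hinf, hset, Submodule.span_insert] at *
    simp only [finrank_bot, add_zero, finrank_span_singleton hb0] at this
    rw [this, ih h.2.2.2, List.length_cons]
    omega

lemma Good.gsBound_le {Λ : Submodule ℤ (Euc n)} {c : ℝ} {l : List (Euc n)}
    (h : Good Λ c l) (hc : 0 ≤ c) : gsBound l ≤ l.length * c ^ 2 := by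
  induction l with
  | nil => simp [gsBound]
  | cons b rest ih =>
    simp only [gsBound, List.length_cons]
    have h1 : ‖Pv (span ℝ {y | y ∈ rest}) b‖ ^ 2 ≤ c ^ 2 := by
      have := h.2.2.1
      nlinarith [norm_nonneg (Pv (span ℝ {y | y ∈ rest}) b)]
    have h2 := ih h.2.2.2
    push_cast
    nlinarith

lemma Good.length_le {Λ : Submodule ℤ (Euc n)} {c : ℝ} {l : List (Euc n)}
    (h : Good Λ c l) : l.length ≤ n := by
  rw [← h.finrank_eq]
  calc Module.finrank ℝ (span ℝ {y | y ∈ l}) ≤ Module.finrank ℝ (Euc n) :=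
        Submodule.finrank_le _
    _ = n := finrank_euclideanSpace_fin


/-- The key block construction: a primitive sublattice spanned by "short" vectors, which is
well-covered, maximal, and captures `λ₁`. -/
lemma exists_block {Λ : Submodule ℤ (Euc n)} (hfin : LocFin (Λ : Set (Euc n)))
    (hne : Λ ≠ ⊥) {γ : ℝ} (hγ : 1 < γ) :
    ∃ V : Submodule ℝ (Euc n),
      0 < lambda1 (Λ : Set (Euc n)) ∧
      1 ≤ Module.finrank ℝ V ∧ V ≤ span ℝ (Λ : Set (Euc n)) ∧
      (∀ x ∈ V, ∃ z ∈ Λ ⊓ V.restrictScalars ℤ,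
        ‖x - z‖ ≤ γ * Real.sqrt n * lambda1 (Λ : Set (Euc n)) / 2) ∧
      (∀ z ∈ Λ, ‖Pv V z‖ < γ * lambda1 (Λ : Set (Euc n)) → z ∈ V) ∧
      lambda1 ((Λ ⊓ V.restrictScalars ℤ : Submodule ℤ (Euc n)) : Set (Euc n))
        = lambda1 (Λ : Set (Euc n)) ∧
      V = span ℝ ((Λ ⊓ V.restrictScalars ℤ : Submodule ℤ (Euc n)) : Set (Euc n)) ∧
      (Λ ⊓ V.restrictScalars ℤ) ≠ ⊥ := by
  obtain ⟨v0, hv0Λ, hv00⟩ := (Submodule.ne_bot_iff Λ).1 hne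
  have hAne : ((Λ : Set (Euc n)) \ {0}).Nonempty := ⟨v0, hv0Λ, by simpa using hv00⟩
  obtain ⟨v, hvΛ, hv0, hvlam, hvmin⟩ := lambda1_attained hfin hAne
  set lam := lambda1 (Λ : Set (Euc n)) with hlam
  have hlampos : 0 < lam := hvlam ▸ norm_pos_iff.2 hv0
  have hgl : lam < γ * lam := by nlinarith
  -- the set of achievable lengths of good lists
  set S : Set ℕ := {k | ∃ l : List (Euc n), Good Λ (γ * lam) l ∧ l.length = k} with hSdef
  have hSne : S.Nonempty := by
    refine ⟨1, [v], ?_, rfl⟩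
    have hset : {y : Euc n | y ∈ ([] : List (Euc n))} = (∅ : Set (Euc n)) := by ext y; simp
    refine ⟨hvΛ, ?_, ?_, trivial⟩
    · rw [hset]; simpa using hv0
    · rw [hset]
      have : Pv (span ℝ (∅ : Set (Euc n))) v = v := by
        apply Pv_eq_self
        rw [Submodule.span_empty, Submodule.bot_orthogonal_eq_top]
        exact Submodule.mem_top
      rw [this, hvlam]; exact hgl
  have hSbdd : BddAbove S := ⟨n, by rintro k ⟨l, hl, rfl⟩; exact hl.length_le⟩
  obtain ⟨l, hgood, hlen⟩ := Nat.sSup_mem hSne hSbdd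
  set V : Submodule ℝ (Euc n) := span ℝ {y | y ∈ l} with hV
  have hVrank : Module.finrank ℝ V = sSup S := by rw [hV, hgood.finrank_eq, hlen]
  have hmax : ∀ z ∈ Λ, ‖Pv V z‖ < γ * lam → z ∈ V := by
    intro z hzΛ hznorm
    by_contra hzV
    have : sSup S + 1 ∈ S := ⟨z :: l, ⟨hzΛ, hzV, hznorm, hgood⟩, by simp [hlen]⟩
    have := le_csSup hSbdd this
    omega
  have hvV : v ∈ V := by
    apply hmax v hvΛ
    calc ‖Pv V v‖ ≤ ‖v‖ := norm_Pv_le V v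
      _ = lam := hvlam
      _ < γ * lam := hgl
  set M : Submodule ℤ (Euc n) := Λ ⊓ V.restrictScalars ℤ with hM
  have hlM : ∀ y ∈ l, y ∈ M := fun y hy =>
    ⟨hgood.mem_lattice y hy, Submodule.subset_span hy⟩
  have hMV : span ℝ (M : Set (Euc n)) = V := by
    apply le_antisymm
    · exact Submodule.span_le.2 fun y hy => hy.2
    · rw [hV]; exact Submodule.span_mono fun y hy => hlM y hy
  have hcover : ∀ x ∈ V, ∃ z ∈ M, ‖x - z‖ ≤ γ * Real.sqrt n * lam / 2 := by
    intro x hx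
    obtain ⟨z, hz, hzb⟩ := nearest_plane l x hx
    have hzM : z ∈ M := by
      refine ⟨?_, span_int_le_real _ hz⟩
      have : span ℤ {y | y ∈ l} ≤ Λ := Submodule.span_le.2 fun y hy => hgood.mem_lattice y hy
      exact this hz
    refine ⟨z, hzM, ?_⟩
    have hb : gsBound l ≤ (n : ℝ) * (γ * lam) ^ 2 := by
      calc gsBound l ≤ l.length * (γ * lam) ^ 2 :=
            hgood.gsBound_le (by positivity)
        _ ≤ (n : ℝ) * (γ * lam) ^ 2 := by
            have := hgood.length_le
            have h2 : (0:ℝ) ≤ (γ * lam) ^ 2 := by positivity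
            have : (l.length : ℝ) ≤ (n : ℝ) := by exact_mod_cast this
            nlinarith
    have hB : (0:ℝ) ≤ γ * Real.sqrt n * lam / 2 := by positivity
    have hsq : ‖x - z‖ ^ 2 ≤ (γ * Real.sqrt n * lam / 2) ^ 2 := by
      have hrn : Real.sqrt n ^ 2 = (n : ℝ) := Real.sq_sqrt (by positivity)
      calc ‖x - z‖ ^ 2 ≤ gsBound l / 4 := hzb
        _ ≤ (n : ℝ) * (γ * lam) ^ 2 / 4 := by linarith
        _ = (γ * Real.sqrt n * lam / 2) ^ 2 := by
              linear_combination (-(γ ^ 2 * lam ^ 2) / 4) * hrn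
    calc ‖x - z‖ = Real.sqrt (‖x - z‖ ^ 2) := (Real.sqrt_sq (norm_nonneg _)).symm
      _ ≤ Real.sqrt ((γ * Real.sqrt n * lam / 2) ^ 2) := Real.sqrt_le_sqrt hsq
      _ = γ * Real.sqrt n * lam / 2 := Real.sqrt_sq hB
  have hvM : v ∈ M := ⟨hvΛ, hvV⟩
  have hlamM : lambda1 (M : Set (Euc n)) = lam := by
    apply le_antisymm
    · rw [← hvlam]; exact lambda1_le hvM hv0
    · exact lambda1_mono (fun x hx => hx.1) ⟨v, hvM, by simpa using hv0⟩
  have hVpos : 0 < Module.finrank ℝ V := by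
    have hv' : (⟨v, hvV⟩ : V) ≠ 0 := fun h => hv0 (by simpa using congrArg Subtype.val h)
    exact Module.finrank_pos_iff_exists_ne_zero.2 ⟨_, hv'⟩
  have hVle : V ≤ span ℝ (Λ : Set (Euc n)) := by
    rw [← hMV]; exact Submodule.span_mono fun x hx => hx.1
  have hMne : M ≠ ⊥ := by
    intro h; rw [h] at hvM; exact hv0 (by simpa using hvM)
  exact ⟨V, hlampos, hVpos, hVle, hcover, hmax, hlamM, hMV.symm, hMne⟩


lemma le_of_sq_le_sq' {a b : ℝ} (ha : 0 ≤ a) (hb : 0 ≤ b) (h : a ^ 2 ≤ b ^ 2) : a ≤ b := by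
  nlinarith

lemma norm_add_sq_of_orth {x y : Euc n} (h : inner ℝ x y = (0:ℝ)) :
    ‖x + y‖ ^ 2 = ‖x‖ ^ 2 + ‖y‖ ^ 2 := by
  have := norm_add_sq_real x y; rw [h] at this; linarith

lemma Pv_eq_zero_iff {V : Submodule ℝ (Euc n)} {x : Euc n} : Pv V x = 0 ↔ x ∈ V := by
  refine ⟨fun h => ?_, Pv_eq_zero⟩
  have := sub_Pv_mem V x
  rwa [h, sub_zero] at this

/-- The orthogonal projection onto `Vᗮ` as a `ℤ`-linear map. -/
def PvZ (V : Submodule ℝ (Euc n)) : Euc n →ₗ[ℤ] Euc n :=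
  (Vᗮ.subtype.comp (orthogonalProjection Vᗮ).toLinearMap).restrictScalars ℤ

/-- The orthogonal projection onto `Vᗮ` as an `ℝ`-linear map. -/
def PvR (V : Submodule ℝ (Euc n)) : Euc n →ₗ[ℝ] Euc n :=
  Vᗮ.subtype.comp (orthogonalProjection Vᗮ).toLinearMap

lemma PvZ_apply (V : Submodule ℝ (Euc n)) (x : Euc n) : PvZ V x = Pv V x := rfl
lemma PvR_apply (V : Submodule ℝ (Euc n)) (x : Euc n) : PvR V x = Pv V x := rfl

lemma map_PvZ_coe (Λ : Submodule ℤ (Euc n)) (V : Submodule ℝ (Euc n)) :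
    ((Submodule.map (PvZ V) Λ : Submodule ℤ (Euc n)) : Set (Euc n)) = Pv V '' Λ :=
  Submodule.map_coe _ _

lemma proj_locFin {Λ : Submodule ℤ (Euc n)} {V : Submodule ℝ (Euc n)} {B : ℝ}
    (hfin : LocFin (Λ : Set (Euc n))) (hB : 0 ≤ B)
    (hcover : ∀ x ∈ V, ∃ z ∈ Λ ⊓ V.restrictScalars ℤ, ‖x - z‖ ≤ B) :
    LocFin ((Submodule.map (PvZ V) Λ : Submodule ℤ (Euc n)) : Set (Euc n)) := by
  intro R
  refine ((hfin (R + B)).image (Pv V)).subset ?_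
  rintro w ⟨hw, hwR⟩
  rw [map_PvZ_coe] at hw
  obtain ⟨z, hzΛ, rfl⟩ := hw
  have hwR' : ‖Pv V z‖ ≤ R := by simpa [mem_closedBall, dist_eq_norm] using hwR
  have hR : 0 ≤ R := le_trans (norm_nonneg _) hwR'
  obtain ⟨u, huM, hu⟩ := hcover (z - Pv V z) (sub_Pv_mem V z)
  refine ⟨z - u, ⟨Submodule.sub_mem _ hzΛ huM.1, ?_⟩, ?_⟩
  · -- z - u ∈ closedBall 0 (R + B)
    have hdecomp : z - u = (z - Pv V z - u) + Pv V z := by abel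
    have horth : inner ℝ (z - Pv V z - u : Euc n) (Pv V z) = (0:ℝ) :=
      Submodule.inner_right_of_mem_orthogonal
        (Submodule.sub_mem _ (sub_Pv_mem V z) huM.2) (Pv_mem_orth V z)
    have hsq : ‖z - u‖ ^ 2 ≤ (R + B) ^ 2 := by
      rw [hdecomp, norm_add_sq_of_orth horth]
      nlinarith [norm_nonneg (z - Pv V z - u), norm_nonneg (Pv V z)]
    simp only [mem_closedBall, dist_eq_norm, sub_zero]
    exact le_of_sq_le_sq' (norm_nonneg _) (by positivity) hsq
  · -- Pv V (z - u) = Pv V z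
    rw [Pv_sub, Pv_eq_zero huM.2, sub_zero]

lemma proj_lambda_lb {Λ : Submodule ℤ (Euc n)} {V : Submodule ℝ (Euc n)} {c : ℝ}
    (hmax : ∀ z ∈ Λ, ‖Pv V z‖ < c → z ∈ V) :
    ∀ w ∈ ((Submodule.map (PvZ V) Λ : Submodule ℤ (Euc n)) : Set (Euc n)), w ≠ 0 → c ≤ ‖w‖ := by
  intro w hw hw0
  rw [map_PvZ_coe] at hw
  obtain ⟨z, hzΛ, rfl⟩ := hw
  by_contra hlt
  push_neg at hlt
  exact hw0 (Pv_eq_zero (hmax z hzΛ hlt))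

lemma proj_rank {Λ : Submodule ℤ (Euc n)} {V : Submodule ℝ (Euc n)}
    (hVle : V ≤ span ℝ (Λ : Set (Euc n))) :
    Module.finrank ℝ (span ℝ ((Submodule.map (PvZ V) Λ : Submodule ℤ (Euc n)) : Set (Euc n)))
      + Module.finrank ℝ V
      = Module.finrank ℝ (span ℝ (Λ : Set (Euc n))) := by
  set T := span ℝ (Λ : Set (Euc n)) with hT
  have him : span ℝ ((Submodule.map (PvZ V) Λ : Submodule ℤ (Euc n)) : Set (Euc n))
      = Submodule.map (PvR V) T := by
    rw [map_PvZ_coe]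
    have : Pv V '' (Λ : Set (Euc n)) = (PvR V) '' (Λ : Set (Euc n)) := rfl
    rw [this, Submodule.span_image]
  set f := (PvR V).domRestrict T with hf
  have hrange : LinearMap.range f = Submodule.map (PvR V) T := LinearMap.range_domRestrict _ _
  have hker : LinearMap.ker f = Submodule.comap T.subtype V := by
    ext x
    simp only [LinearMap.mem_ker, Submodule.mem_comap, LinearMap.domRestrict_apply, hf]
    rw [PvR_apply, Pv_eq_zero_iff]
    rfl
  have := LinearMap.finrank_range_add_finrank_ker f
  rw [hrange, hker] at this
  rw [him, LinearEquiv.finrank_eq (Submodule.comapSubtypeEquivOfLe hVle)] at *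
  omega


lemma covRad_le {A : Set (Euc n)} {B : ℝ} (hB : 0 ≤ B)
    (h : ∀ x ∈ (span ℝ A : Submodule ℝ (Euc n)), infDist x A ≤ B) : covRad A ≤ B :=
  Real.sSup_le (by rintro _ ⟨x, hx, rfl⟩; exact h x hx) hB

lemma projPerp_congr {S : Set (Euc n)} {V : Submodule ℝ (Euc n)} (h : span ℝ S = V)
    (A : Set (Euc n)) : projPerp S A = Pv V '' A := by
  subst h; rfl

lemma Pv_bot (x : Euc n) : Pv (⊥ : Submodule ℝ (Euc n)) x = x := by
  apply Pv_eq_self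
  rw [Submodule.bot_orthogonal_eq_top]
  exact Submodule.mem_top

lemma projPerp_bot (A : Set (Euc n)) :
    projPerp ((⊥ : Submodule ℤ (Euc n)) : Set (Euc n)) A = A := by
  have h : span ℝ ((⊥ : Submodule ℤ (Euc n)) : Set (Euc n)) = (⊥ : Submodule ℝ (Euc n)) := by
    rw [Submodule.bot_coe, Submodule.span_zero_singleton]
  rw [projPerp_congr h A, show Pv (⊥ : Submodule ℝ (Euc n)) = id from funext Pv_bot,
    Set.image_id]

/-- Key pointwise fact: on `Vᗮ`, projecting along `(V ⊔ U)ᗮ` agrees with projecting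
along `Uᗮ`, provided `U ≤ Vᗮ`. -/
lemma Pv_sup_eq {V U : Submodule ℝ (Euc n)} (hU : U ≤ Vᗮ) {w : Euc n} (hw : w ∈ Vᗮ) :
    Pv (V ⊔ U) w = Pv U w := by
  have ha : w - Pv U w ∈ U := sub_Pv_mem U w
  have hb : Pv U w ∈ (V ⊔ U)ᗮ := by
    rw [← Submodule.inf_orthogonal]
    refine ⟨?_, Pv_mem_orth U w⟩
    have : w - (w - Pv U w) ∈ Vᗮ := Submodule.sub_mem _ hw (hU ha)
    simpa using this
  have hmem : w - Pv U w ∈ ((V ⊔ U)ᗮ)ᗮ :=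
    Submodule.le_orthogonal_orthogonal _ ((le_sup_right : U ≤ V ⊔ U) ha)
  exact Submodule.eq_starProjection_of_mem_orthogonal' hb hmem (by abel)


/-- Main induction: every locally finite lattice (of any rank) admits a
`(γ√n, γ)`-filtration. -/
lemma aux (γ : ℝ) (hγ : 1 < γ) :
    ∀ d : ℕ, ∀ Λ : Submodule ℤ (Euc n), LocFin (Λ : Set (Euc n)) →
      Module.finrank ℝ (span ℝ (Λ : Set (Euc n))) = d →
      ∃ m Ls, IsQGFiltration Λ m Ls (γ * Real.sqrt n) γ := by
  intro d
  induction d using Nat.strong_induction_on with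
  | _ d ih =>
  intro Λ hfin hrank
  by_cases hbot : Λ = ⊥
  · subst hbot
    refine ⟨0, fun _ => ⊥, ⟨rfl, rfl, fun j hj => absurd hj (by omega), fun j hj => ?_⟩,
      fun j hj1 hj0 => absurd (le_trans hj1 hj0) (by omega),
      fun j hj1 hj0 => absurd (lt_of_le_of_lt hj1 hj0) (by omega)⟩
    ext x
    simp only [Submodule.bot_coe, Set.mem_singleton_iff, Set.mem_inter_iff, SetLike.mem_coe]
    constructor
    · rintro rfl; exact ⟨rfl, Submodule.zero_mem _⟩
    · rintro ⟨h, _⟩; exact h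
  · obtain ⟨V, hlampos, hV1, hVle, hcover, hmax, hlamM, hspanM, hMne⟩ :=
      exists_block hfin hbot hγ
    set lam := lambda1 (Λ : Set (Euc n)) with hlamdef
    set M : Submodule ℤ (Euc n) := Λ ⊓ V.restrictScalars ℤ with hMdef
    set Λ' : Submodule ℤ (Euc n) := Submodule.map (PvZ V) Λ with hΛ'def
    set k := Module.finrank ℝ V with hkdef
    have hq0 : (0:ℝ) ≤ γ * Real.sqrt n := by positivity
    have hB : (0:ℝ) ≤ γ * Real.sqrt n * lam / 2 := by positivity
    have hfin' : LocFin (Λ' : Set (Euc n)) := proj_locFin hfin hB hcover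
    have hkd : k ≤ d := by
      rw [← hrank]
      exact Submodule.finrank_mono hVle
    have hrank' : Module.finrank ℝ (span ℝ (Λ' : Set (Euc n))) = d - k := by
      have hpr := proj_rank (Λ := Λ) (V := V) hVle
      rw [← hΛ'def] at hpr
      omega
    obtain ⟨m', Ls', hchain', hcond2', hcond3'⟩ :=
      ih (d - k) (by omega) Λ' hfin' hrank'
    obtain ⟨hLs'0, hLs'm, hstrict', hprim'⟩ := hchain'
    -- the lifted chain
    set W : ℕ → Submodule ℝ (Euc n) := fun i => V ⊔ span ℝ ((Ls' i : Set (Euc n))) with hWdef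
    set Ls : ℕ → Submodule ℤ (Euc n) := fun j =>
      match j with
      | 0 => ⊥
      | Nat.succ i => Λ ⊓ (W i).restrictScalars ℤ
      with hLsdef
    have hΛ'orth : (Λ' : Set (Euc n)) ⊆ (Vᗮ : Set (Euc n)) := by
      rintro w hw
      rw [hΛ'def, map_PvZ_coe] at hw
      obtain ⟨z, _, rfl⟩ := hw
      exact Pv_mem_orth V z
    have hsubΛ' : ∀ i ≤ m', Ls' i ≤ Λ' := by
      intro i hi w hw
      have := hprim' i hi
      have hw' : w ∈ (Ls' i : Set (Euc n)) := hw
      rw [this] at hw'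
      exact hw'.1
    have hspanorth : ∀ i ≤ m', span ℝ ((Ls' i : Set (Euc n))) ≤ Vᗮ := fun i hi =>
      Submodule.span_le.2 fun w hw => hΛ'orth (hsubΛ' i hi hw)
    have hlift : ∀ i ≤ m', ∀ w ∈ Ls' i, ∃ z ∈ Ls (i+1), Pv V z = w ∧ z - w ∈ V := by
      intro i hi w hw
      obtain ⟨z, hzΛ, hzw⟩ := (Submodule.mem_map).1 (hsubΛ' i hi hw)
      have hzV : z - w ∈ V := by rw [← hzw]; exact sub_Pv_mem V z
      refine ⟨z, ⟨hzΛ, ?_⟩, hzw, hzV⟩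
      have : z = (z - w) + w := by abel
      rw [this]
      exact Submodule.add_mem _ (Submodule.mem_sup_left hzV)
        (Submodule.mem_sup_right (Submodule.subset_span hw))
    have hproj : ∀ i ≤ m', ∀ z ∈ Ls (i+1), Pv V z ∈ Ls' i := by
      intro i hi z hz
      have hzΛ : z ∈ Λ := hz.1
      have hzW : z ∈ W i := hz.2
      obtain ⟨a, ha, b, hb, hab⟩ := Submodule.mem_sup.1 hzW
      have hPvz : Pv V z = b := by
        rw [← hab, Pv_add, Pv_eq_zero ha, Pv_eq_self (hspanorth i hi hb), zero_add]
      have h1 : Pv V z ∈ (Λ' : Set (Euc n)) := ⟨z, hzΛ, rfl⟩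
      have h2 : Pv V z ∈ span ℝ ((Ls' i : Set (Euc n))) := hPvz ▸ hb
      have := hprim' i hi
      have : Pv V z ∈ (Ls' i : Set (Euc n)) := by rw [this]; exact ⟨h1, h2⟩
      exact this
    have hMle : ∀ i, M ≤ Λ ⊓ (W i).restrictScalars ℤ := by
      intro i
      exact inf_le_inf_left Λ (by
        intro x hx
        exact Submodule.mem_sup_left hx)
    have hVspan : ∀ i, V ≤ span ℝ ((Ls (i+1) : Submodule ℤ (Euc n)) : Set (Euc n)) := by
      intro i
      rw [hspanM]
      exact Submodule.span_mono fun x hx => hMle i hx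
    have hspanLs : ∀ i ≤ m', span ℝ ((Ls (i+1) : Submodule ℤ (Euc n)) : Set (Euc n)) = W i := by
      intro i hi
      apply le_antisymm
      · apply Submodule.span_le.2
        intro x hx
        exact hx.2
      · apply sup_le (hVspan i)
        apply Submodule.span_le.2
        intro w hw
        obtain ⟨z, hz, hzw, hzV⟩ := hlift i hi w hw
        have hzspan : z ∈ span ℝ ((Ls (i+1) : Submodule ℤ (Euc n)) : Set (Euc n)) :=
          Submodule.subset_span hz
        have : w = z - (z - w) := by abel
        rw [this]
        exact Submodule.sub_mem _ hzspan (hVspan i hzV)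
    -- the chain is primitive
    have hprim : ∀ j ≤ m' + 1, ((Ls j : Submodule ℤ (Euc n)) : Set (Euc n))
        = (Λ : Set (Euc n)) ∩ (span ℝ ((Ls j : Submodule ℤ (Euc n)) : Set (Euc n))
            : Submodule ℝ (Euc n)) := by
      intro j hj
      match j with
      | 0 =>
        have h00 : Ls 0 = (⊥ : Submodule ℤ (Euc n)) := rfl
        rw [h00]
        ext x
        constructor
        · intro hx
          have hx0 : x = 0 := by simpa using hx
          subst hx0
          exact ⟨Submodule.zero_mem _, Submodule.zero_mem _⟩
        · rintro ⟨_, hx⟩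
          have hx' : x ∈ span ℝ ((⊥ : Submodule ℤ (Euc n)) : Set (Euc n)) := hx
          rw [Submodule.bot_coe, Submodule.span_zero_singleton] at hx'
          simpa using hx'
      | Nat.succ i =>
        rw [hspanLs i (by omega)]
        rfl
    -- strictness
    have hLs1 : Ls 1 = M := by
      have h0 : span ℝ ((Ls' 0 : Submodule ℤ (Euc n)) : Set (Euc n)) = ⊥ := by
        rw [hLs'0, Submodule.bot_coe, Submodule.span_zero_singleton]
      show Λ ⊓ (W 0).restrictScalars ℤ = M
      rw [hWdef]
      simp only [h0, sup_bot_eq]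
      rfl
    have hstrict : ∀ j < m' + 1, Ls j < Ls (j + 1) := by
      intro j hj
      match j with
      | 0 =>
        show (⊥ : Submodule ℤ (Euc n)) < Ls 1
        rw [hLs1]
        exact Ne.bot_lt' (Ne.symm hMne)
      | Nat.succ i =>
        have hi : i < m' := by omega
        rw [SetLike.lt_iff_le_and_exists]
        constructor
        · exact inf_le_inf_left Λ (by
            intro x hx
            exact sup_le_sup_left
              (Submodule.span_mono (SetLike.coe_subset_coe.2 (hstrict' i hi).le)) V hx)
        · obtain ⟨w, hw2, hw1⟩ := SetLike.exists_of_lt (hstrict' i hi)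
          obtain ⟨z, hz, hzw, _⟩ := hlift (i+1) (by omega) w hw2
          refine ⟨z, hz, fun hzmem => hw1 ?_⟩
          rw [← hzw]
          exact hproj i (by omega) z hzmem
    -- endpoint
    have hend : Ls (m' + 1) = Λ := by
      show Λ ⊓ (W m').restrictScalars ℤ = Λ
      rw [inf_eq_left]
      intro z hz
      have h1 : z - Pv V z ∈ V := sub_Pv_mem V z
      have h2 : Pv V z ∈ span ℝ ((Ls' m' : Submodule ℤ (Euc n)) : Set (Euc n)) := by
        apply Submodule.subset_span
        rw [hLs'm]
        exact ⟨z, hz, rfl⟩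
      have : z = (z - Pv V z) + Pv V z := by abel
      show z ∈ W m'
      rw [this]
      exact Submodule.add_mem _ (Submodule.mem_sup_left h1) (Submodule.mem_sup_right h2)
    -- quotient identification
    have hquot1 : quotLat Ls 1 = (M : Set (Euc n)) := by
      show projPerp ((Ls 0 : Submodule ℤ (Euc n)) : Set (Euc n)) _ = _
      rw [show Ls 0 = ⊥ from rfl, projPerp_bot, hLs1]
    have hquotS : ∀ i, 1 ≤ i → i ≤ m' → quotLat Ls (i + 1) = quotLat Ls' i := by
      intro i hi1 him
      obtain ⟨p, rfl⟩ : ∃ p, i = p + 1 := ⟨i - 1, by omega⟩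
      have hpm : p ≤ m' := by omega
      have hLHS : quotLat Ls (p + 2)
          = Pv (W p) '' ((Ls (p+2) : Submodule ℤ (Euc n)) : Set (Euc n)) := by
        show projPerp ((Ls (p+1) : Submodule ℤ (Euc n)) : Set (Euc n)) _ = _
        rw [projPerp_congr (hspanLs p hpm)]
      have hRHS : quotLat Ls' (p + 1)
          = Pv (span ℝ ((Ls' p : Submodule ℤ (Euc n)) : Set (Euc n)))
              '' ((Ls' (p+1) : Submodule ℤ (Euc n)) : Set (Euc n)) := by
        show projPerp ((Ls' p : Submodule ℤ (Euc n)) : Set (Euc n)) _ = _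
        rw [projPerp_congr rfl]
      rw [hLHS, hRHS]
      have hUorth : span ℝ ((Ls' p : Submodule ℤ (Euc n)) : Set (Euc n)) ≤ Vᗮ :=
        hspanorth p hpm
      ext y
      constructor
      · rintro ⟨x, hx, rfl⟩
        have hxV : Pv V x ∈ Ls' (p+1) := hproj (p+1) (by omega) x hx
        refine ⟨Pv V x, hxV, ?_⟩
        have hdiff : x - Pv V x ∈ W p := Submodule.mem_sup_left (sub_Pv_mem V x)
        have h1 : Pv (W p) x = Pv (W p) (Pv V x) := by
          have := Pv_sub (W p) x (Pv V x)
          have h0 : Pv (W p) (x - Pv V x) = 0 := Pv_eq_zero hdiff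
          rw [h0] at this
          exact sub_eq_zero.1 this.symm
        rw [h1]
        exact (Pv_sup_eq hUorth (Pv_mem_orth V x)).symm
      · rintro ⟨w, hw, rfl⟩
        obtain ⟨z, hz, hzw, hzV⟩ := hlift (p+1) (by omega) w hw
        refine ⟨z, hz, ?_⟩
        have hwVorth : w ∈ Vᗮ := hΛ'orth (hsubΛ' (p+1) (by omega) hw)
        have h1 : Pv (W p) z = Pv (W p) w := by
          have h0 : Pv (W p) (z - w) = 0 := Pv_eq_zero (Submodule.mem_sup_left hzV)
          have := Pv_sub (W p) z w
          rw [h0] at this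
          exact sub_eq_zero.1 this.symm
        rw [h1]
        exact Pv_sup_eq hUorth hwVorth
    refine ⟨m' + 1, Ls, ⟨rfl, hend, hstrict, hprim⟩, ?_, ?_⟩
    · -- condition 2
      intro j hj1 hjm
      match j with
      | 1 =>
        rw [hquot1, hlamM]
        apply covRad_le (by positivity)
        intro x hx
        rw [hspanM.symm] at hx  -- hspanM : V = span ℝ M ; need x ∈ span ℝ M → x ∈ V
        obtain ⟨z, hzM, hz⟩ := hcover x hx
        calc infDist x (M : Set (Euc n)) ≤ dist x z := infDist_le_dist_of_mem hzM
          _ = ‖x - z‖ := by rw [dist_eq_norm]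
          _ ≤ γ * Real.sqrt n * lam / 2 := hz
      | Nat.succ (Nat.succ i) =>
        rw [hquotS (i+1) (by omega) (by omega)]
        exact hcond2' (i+1) (by omega) (by omega)
    · -- condition 3
      intro j hj1 hjm
      match j with
      | 1 =>
        have hm1 : 1 ≤ m' := by omega
        have hq2 : quotLat Ls 2 = ((Ls' 1 : Submodule ℤ (Euc n)) : Set (Euc n)) := by
          rw [hquotS 1 le_rfl hm1]
          show projPerp ((Ls' 0 : Submodule ℤ (Euc n)) : Set (Euc n)) _ = _
          rw [hLs'0, projPerp_bot]
        rw [hq2, hquot1, hlamM]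
        have hne1 : ∃ w, w ∈ Ls' 1 ∧ w ≠ 0 := by
          obtain ⟨w, hw2, hw1⟩ := SetLike.exists_of_lt (hLs'0 ▸ hstrict' 0 hm1)
          exact ⟨w, hw2, fun h => hw1 (h ▸ Submodule.zero_mem _)⟩
        obtain ⟨w0, hw0, hw00⟩ := hne1
        apply le_lambda1 ⟨w0, hw0, by simpa using hw00⟩
        intro w hw hw0
        exact proj_lambda_lb hmax w (hsubΛ' 1 hm1 hw) hw0
      | Nat.succ (Nat.succ i) =>
        rw [hquotS (i+2) (by omega) (by omega), hquotS (i+1) (by omega) (by omega)]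
        exact hcond3' (i+1) (by omega) (by omega)

end QGF

/-- For every `n ≥ 1`, every full-rank lattice `L ⊆ ℝⁿ`, and every `γ > 1`, there exists a
`(γ√n, γ)`-filtration of `L`. -/
theorem exists_qg_filtration
    (n : ℕ) (hn : 1 ≤ n)
    (L : Submodule ℤ (EuclideanSpace ℝ (Fin n))) [DiscreteTopology L] (hL : IsZLattice ℝ L)
    (γ : ℝ) (hγ : 1 < γ) :
    ∃ (m : ℕ) (Ls : ℕ → Submodule ℤ (EuclideanSpace ℝ (Fin n))),
      IsQGFiltration L m Ls (γ * Real.sqrt n) γ := by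
  have hdiscAdd : DiscreteTopology L.toAddSubgroup := ‹DiscreteTopology L›
  have hclosed : IsClosed (L : Set (EuclideanSpace ℝ (Fin n))) :=
    AddSubgroup.isClosed_of_discrete (H := L.toAddSubgroup)
  haveI hdisc : DiscreteTopology ((L : Set (EuclideanSpace ℝ (Fin n)))) := ‹DiscreteTopology L›
  have hfin : QGF.LocFin (L : Set (EuclideanSpace ℝ (Fin n))) := by
    intro R
    rw [Set.inter_comm]
    exact Metric.finite_isBounded_inter_isClosed DiscreteTopology.isDiscrete Metric.isBounded_closedBall hclosed
  exact QGF.aux γ hγ _ L hfin rfl
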